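/- Let G be a variable-regular Tanner graph with variable degree d_v ≥ 2 and girth g with g/2 even. Suppose S is an (a,b) trapping set whose induced subgraph G(S) contains a check node w of degree k ≥ 2, and assume b < k(d_v − 1) + (k mod 2). Set b' = b − (k mod 2) and T = k(d_v − 1) − b'. Then a ≥ k + T · Σ_{i=0}^{g/4 − 2} (d_v − 1)^i. -/

import Mathlib

/-- Degree of a variable node `v` in the Tanner graph given by adjacency `adj`. -/
def varDeg {V C : Type*} [Fintype C] (adj : V → C → Prop) [∀ v c, Decidable (adj v c)] (v : V) : ℕ :=
  (Finset.univ.filter (fun c => adj v c)).card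

/-- Degree of a check node `c` in the subgraph induced by the set `S` of variable nodes. -/
def chkDeg {V C : Type*} [DecidableEq V] (adj : V → C → Prop) [∀ v c, Decidable (adj v c)]
    (S : Finset V) (c : C) : ℕ :=
  (S.filter (fun v => adj v c)).card

/-- The set of check nodes of odd degree in the subgraph induced by `S`. -/
def oddChks {V C : Type*} [DecidableEq V] [Fintype C] (adj : V → C → Prop) [∀ v c, Decidable (adj v c)]
    (S : Finset V) : Finset C :=
  Finset.univ.filter (fun c => Odd (chkDeg adj S c))

/-- The Tanner graph of the adjacency relation `adj`, as a simple graph on `V ⊕ C`. -/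
def tanner {V C : Type*} (adj : V → C → Prop) : SimpleGraph (V ⊕ C) where
  Adj x y := (∃ v c, x = Sum.inl v ∧ y = Sum.inr c ∧ adj v c) ∨
    (∃ v c, x = Sum.inr c ∧ y = Sum.inl v ∧ adj v c)
  symm := ⟨by
    rintro x y (⟨v, c, h1, h2, h3⟩ | ⟨v, c, h1, h2, h3⟩)
    · exact Or.inr ⟨v, c, h2, h1, h3⟩
    · exact Or.inl ⟨v, c, h2, h1, h3⟩⟩
  loopless := ⟨by
    rintro x (⟨v, c, h1, h2, _⟩ | ⟨v, c, h1, h2, _⟩) <;> subst h1 <;> simp at h2⟩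

set_option linter.unusedSectionVars false
set_option linter.unusedVariables false
set_option maxHeartbeats 1000000

section Aux
open SimpleGraph Walk
variable {α : Type*} {G : SimpleGraph α}

lemma path_edge_len {x y : α} (p : G.Walk x y) (hp : p.IsPath) (he : s(x, y) ∈ p.edges) :
    p.length = 1 := by
  induction p with
  | nil => simp at he
  | @cons u z y h q ih =>
    rw [Walk.edges_cons, List.mem_cons] at he
    rcases he with he | he
    · rw [Sym2.eq_iff] at he
      rcases he with ⟨-, rfl⟩ | ⟨rfl, rfl⟩
      · have : q = Walk.nil := Walk.isPath_iff_eq_nil.mp (hp.of_cons)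
        simp [this]
      · exact absurd rfl h.ne
    · exact absurd (q.fst_mem_support_of_mem_edges he) ((Walk.cons_isPath_iff h q).mp hp).2
  
/-- Concatenating a fresh vertex to a path yields a path. -/

lemma isPath_concat {x y z : α} {p : G.Walk x y} (hp : p.IsPath) (h : G.Adj y z)
    (hz : z ∉ p.support) : (p.concat h).IsPath := by
  rw [Walk.isPath_def, Walk.support_concat, List.nodup_append]
  refine ⟨hp.support_nodup, List.nodup_singleton z, ?_⟩
  intro a ha b hb
  simp only [List.mem_singleton] at hb
  subst hb
  exact fun h => hz (h ▸ ha)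

/-- In a graph where all cycles have length at least `g`, a path of length at least 2
between adjacent vertices has length at least `g - 1`. -/

lemma isPath_of_concat {x y z : α} {p : G.Walk x y} {h : G.Adj y z}
    (hp : (p.concat h).IsPath) : p.IsPath := by
  rw [Walk.isPath_def] at hp ⊢
  rw [Walk.support_concat] at hp
  exact hp.of_append_left

lemma not_mem_support_of_concat_isPath {x y z : α} {p : G.Walk x y} {h : G.Adj y z}
    (hp : (p.concat h).IsPath) : z ∉ p.support := by
  rw [Walk.isPath_def, Walk.support_concat, List.nodup_append] at hp
  intro hz
  exact hp.2.2 z hz z (List.mem_singleton_self z) rfl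

lemma girth_path_adj {g : ℕ} (hg : ∀ (z : α) (c : G.Walk z z), c.IsCycle → g ≤ c.length)
    {x y : α} (p : G.Walk x y) (hp : p.IsPath) (h : G.Adj y x) (h2 : 2 ≤ p.length) :
    g ≤ p.length + 1 := by
  have hne : s(y, x) ∉ p.edges := by
    intro hmem
    have := path_edge_len p hp (by rwa [Sym2.eq_swap])
    omega
  have hc : (Walk.cons h p).IsCycle := (Walk.cons_isCycle_iff p h).mpr ⟨hp, hne⟩
  simpa using hg y (Walk.cons h p) hc

lemma two_paths_cycle {g : ℕ} (hg : ∀ (z : α) (c : G.Walk z z), c.IsCycle → g ≤ c.length)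
    {x y : α} (p q : G.Walk x y) (hp : p.IsPath) (hq : q.IsPath) (hne : p ≠ q) :
    g ≤ p.length + q.length := by
  classical
  set s : Set (Sym2 α) := {e | e ∈ p.edges ∨ e ∈ q.edges} with hs
  set H : SimpleGraph α := SimpleGraph.fromEdgeSet s with hH
  have hedge : ∀ e ∈ s, e ∈ G.edgeSet := by
    rintro e (he | he)
    · exact p.edges_subset_edgeSet he
    · exact q.edges_subset_edgeSet he
  have hHG : ∀ e ∈ H.edgeSet, e ∈ G.edgeSet := by
    intro e he
    rw [hH, SimpleGraph.edgeSet_fromEdgeSet] at he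
    exact hedge e he.1
  have hsH : ∀ e ∈ s, e ∈ H.edgeSet := by
    intro e he
    rw [hH, SimpleGraph.edgeSet_fromEdgeSet]
    exact ⟨he, G.not_isDiag_of_mem_edgeSet (hedge e he)⟩
  have hpH : ∀ e ∈ p.edges, e ∈ H.edgeSet := fun e he => hsH e (Or.inl he)
  have hqH : ∀ e ∈ q.edges, e ∈ H.edgeSet := fun e he => hsH e (Or.inr he)
  have hnacyc : ¬ H.IsAcyclic := by
    intro hA
    apply hne
    have h1 : (⟨p.transfer H hpH, hp.transfer hpH⟩ : H.Path x y)
        = ⟨q.transfer H hqH, hq.transfer hqH⟩ := hA.path_unique _ _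
    have h2 : p.transfer H hpH = q.transfer H hqH := congrArg Subtype.val h1
    have h3 := congrArg (fun (r : H.Walk x y) =>
      r.transfer G (fun e he => hHG e (r.edges_subset_edgeSet he))) h2
    simp only [Walk.transfer_transfer] at h3
    rwa [Walk.transfer_self, Walk.transfer_self] at h3
  simp only [SimpleGraph.IsAcyclic] at hnacyc
  push_neg at hnacyc
  obtain ⟨z, c, hc⟩ := hnacyc
  have hcG : (c.transfer G (fun e he => hHG e (c.edges_subset_edgeSet he))).IsCycle :=
    hc.transfer _
  have hlen : g ≤ c.length := by
    have := hg z _ hcG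
    rwa [Walk.length_transfer] at this
  -- bound c.length by p.length + q.length
  have hnodup : c.edges.Nodup := hc.isTrail.edges_nodup
  have hsub : c.edges ⊆ p.edges ++ q.edges := by
    intro e he
    have := c.edges_subset_edgeSet he
    rw [hH, SimpleGraph.edgeSet_fromEdgeSet] at this
    rcases this.1 with h | h
    · exact List.mem_append_left _ h
    · exact List.mem_append_right _ h
  have hclen : c.length ≤ p.length + q.length := by
    have h1 : c.edges.length = c.edges.toFinset.card := (List.toFinset_card_of_nodup hnodup).symm
    have h2 : c.edges.toFinset ⊆ (p.edges ++ q.edges).toFinset := by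
      intro e he
      rw [List.mem_toFinset] at he ⊢
      exact hsub he
    have h3 : (p.edges ++ q.edges).toFinset.card ≤ (p.edges ++ q.edges).length :=
      (p.edges ++ q.edges).toFinset_card_le
    have := (Finset.card_le_card h2).trans h3
    rw [← h1, List.length_append, Walk.length_edges, Walk.length_edges,
      Walk.length_edges] at this
    exact this
  omega

end Aux

section Tanner

variable {V C : Type*} [Fintype C] [DecidableEq V] (adj : V → C → Prop) [∀ v c, Decidable (adj v c)]

lemma tadj_vc {v : V} {c : C} (h : adj v c) : (tanner adj).Adj (Sum.inl v) (Sum.inr c) :=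
  Or.inl ⟨v, c, rfl, rfl, h⟩

lemma tadj_cv {v : V} {c : C} (h : adj v c) : (tanner adj).Adj (Sum.inr c) (Sum.inl v) :=
  Or.inr ⟨v, c, rfl, rfl, h⟩

lemma tadj_to_inl {x : V ⊕ C} {v : V} (h : (tanner adj).Adj x (Sum.inl v)) :
    ∃ c, x = Sum.inr c ∧ adj v c := by
  rcases h with ⟨v', c', h1, h2, h3⟩ | ⟨v', c', h1, h2, h3⟩
  · exact absurd h2 (by simp)
  · rw [Sum.inl.injEq] at h2
    exact ⟨c', h1, h2 ▸ h3⟩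

lemma tadj_to_inr {x : V ⊕ C} {c : C} (h : (tanner adj).Adj x (Sum.inr c)) :
    ∃ v, x = Sum.inl v ∧ adj v c := by
  rcases h with ⟨v', c', h1, h2, h3⟩ | ⟨v', c', h1, h2, h3⟩
  · rw [Sum.inr.injEq] at h2
    exact ⟨v', h1, h2 ▸ h3⟩
  · exact absurd h2 (by simp)

/-- Walks from a check node to a variable node, inside `S`, that are paths. -/
def TGood (S : Finset V) {x y : V ⊕ C} (p : (tanner adj).Walk x y) : Prop :=
  p.IsPath ∧ ∀ u : V, Sum.inl u ∈ p.support → u ∈ S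

open Classical in
noncomputable def layer (S : Finset V) (w : C) (t : ℕ) : Finset V :=
  S.filter (fun v => ∃ p : (tanner adj).Walk (Sum.inr w) (Sum.inl v),
    TGood adj S p ∧ p.length = 2*t+1)

open Classical in
noncomputable def dead (S : Finset V) (w : C) (t : ℕ) : Finset C :=
  Finset.univ.filter (fun c => chkDeg adj S c = 1 ∧ ∃ v ∈ layer adj S w t, adj v c)

variable {g : ℕ} (hg : ∀ (z : V ⊕ C) (c : (tanner adj).Walk z z), c.IsCycle → g ≤ c.length)
  (S : Finset V) (w : C)

lemma layer_zero : layer adj S w 0 = S.filter (fun v => adj v w) := by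
  classical
  ext v
  simp only [layer, Finset.mem_filter]
  constructor
  · rintro ⟨hvS, p, ⟨hpath, hvars⟩, hlen⟩
    refine ⟨hvS, ?_⟩
    cases p with
    | @cons _ z _ h q =>
      have hz : z = Sum.inl v := by
        have h0 : q.length = 0 := by
          simp only [SimpleGraph.Walk.length_cons] at hlen
          omega
        exact SimpleGraph.Walk.eq_of_length_eq_zero h0
      subst hz
      obtain ⟨c, hc, hadj⟩ := tadj_to_inl adj h
      rw [Sum.inr.injEq] at hc
      exact hc ▸ hadj
  · rintro ⟨hvS, hadj⟩
    refine ⟨hvS, SimpleGraph.Walk.cons (tadj_cv adj hadj) SimpleGraph.Walk.nil, ⟨⟨?_, ?_⟩, ?_⟩⟩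
    · simp [SimpleGraph.Walk.isPath_def]
    · intro u hu
      simp [SimpleGraph.Walk.support_cons] at hu
      exact hu ▸ hvS
    · simp

include hg in
lemma good_unique {v : V} (p q : (tanner adj).Walk (Sum.inr w) (Sum.inl v))
    (hp : p.IsPath) (hq : q.IsPath) (hlt : p.length + q.length < g) : p = q := by
  by_contra hne
  exact absurd (two_paths_cycle hg p q hp hq hne) (by omega)

include hg in
lemma layer_disjoint {s t : ℕ} (hst : s ≠ t) (hlen : 2*s + 2*t + 2 < g) :
    Disjoint (layer adj S w s) (layer adj S w t) := by
  classical
  rw [Finset.disjoint_left]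
  intro v h1 h2
  simp only [layer, Finset.mem_filter] at h1 h2
  obtain ⟨-, p, ⟨hppath, -⟩, hplen⟩ := h1
  obtain ⟨-, q, ⟨hqpath, -⟩, hqlen⟩ := h2
  have : p = q := good_unique adj hg w p q hppath hqpath (by omega)
  rw [this, hqlen] at hplen
  omega

lemma dead_subset (hw2 : 2 ≤ chkDeg adj S w) (t : ℕ) :
    ∀ c ∈ dead adj S w t, c ∈ oddChks adj S ∧ c ≠ w := by
  classical
  intro c hc
  simp only [dead, Finset.mem_filter, Finset.mem_univ, true_and] at hc
  obtain ⟨h1, -⟩ := hc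
  constructor
  · simp only [oddChks, Finset.mem_filter, Finset.mem_univ, true_and, h1]
    norm_num
  · intro h
    rw [h] at h1
    omega

include hg in
lemma dead_disjoint {s t : ℕ} (hst : s ≠ t) (hlen : 2*s + 2*t + 2 < g) :
    Disjoint (dead adj S w s) (dead adj S w t) := by
  classical
  rw [Finset.disjoint_left]
  intro c h1 h2
  simp only [dead, Finset.mem_filter, Finset.mem_univ, true_and] at h1 h2
  obtain ⟨hdeg, v1, hv1, hadj1⟩ := h1
  obtain ⟨-, v2, hv2, hadj2⟩ := h2
  have hv1S : v1 ∈ S := by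
    have := hv1; simp only [layer, Finset.mem_filter] at this; exact this.1
  have hv2S : v2 ∈ S := by
    have := hv2; simp only [layer, Finset.mem_filter] at this; exact this.1
  have heq : v1 = v2 := by
    obtain ⟨z, hz⟩ := Finset.card_eq_one.mp hdeg
    have m1 : v1 ∈ S.filter (fun v => adj v c) := Finset.mem_filter.mpr ⟨hv1S, hadj1⟩
    have m2 : v2 ∈ S.filter (fun v => adj v c) := Finset.mem_filter.mpr ⟨hv2S, hadj2⟩
    rw [hz, Finset.mem_singleton] at m1 m2
    rw [m1, m2]
  subst heq
  exact (Finset.disjoint_left.mp (layer_disjoint adj hg S w hst hlen) hv1) hv2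

include hg in
lemma expansion {dv : ℕ} (hdv : 2 ≤ dv) (hreg : ∀ v : V, varDeg adj v = dv)
    (t : ℕ) (hlen : 4*t + 8 ≤ g) :
    (dv - 1) * (layer adj S w t).card
      ≤ (layer adj S w (t+1)).card + (dead adj S w t).card := by
  classical
  -- decompose each good walk as `r.concat e`
  have hdecomp : ∀ v : V, v ∈ layer adj S w t →
      ∃ (c' : C) (hadj : adj v c') (r : (tanner adj).Walk (Sum.inr w) (Sum.inr c')),
        TGood adj S (r.concat (tadj_cv adj hadj)) ∧
          (r.concat (tadj_cv adj hadj)).length = 2*t+1 := by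
    intro v hv
    simp only [layer, Finset.mem_filter] at hv
    obtain ⟨hvS, p, hpgood, hplen⟩ := hv
    cases p with
    | @cons _ z _ h q =>
      obtain ⟨x, r, h', heq⟩ := SimpleGraph.Walk.exists_cons_eq_concat h q
      obtain ⟨c', rfl, hadj⟩ := tadj_to_inl adj h'
      refine ⟨c', hadj, r, ?_, ?_⟩
      · exact heq ▸ hpgood
      · exact heq ▸ hplen
  choose cfun hadjfun rfun hgoodfun hlenfun using hdecomp
  -- pv : the chosen good walk of length 2t+1 ending at v
  set pv : ∀ v : V, v ∈ layer adj S w t → (tanner adj).Walk (Sum.inr w) (Sum.inl v) :=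
    fun v hv => (rfun v hv).concat (tadj_cv adj (hadjfun v hv)) with hpv
  -- Fact A: a non-parent check adjacent to v is not on the walk pv
  have factA : ∀ (v : V) (hv : v ∈ layer adj S w t) (c : C), adj v c → c ≠ cfun v hv →
      Sum.inr c ∉ (pv v hv).support := by
    intro v hv c hc hne hmem
    have hgood := hgoodfun v hv
    have hlenv : (pv v hv).length = 2*t+1 := hlenfun v hv
    have hpath : (pv v hv).IsPath := hgood.1
    have hrpath : (rfun v hv).IsPath := isPath_of_concat hpath
    have hrlen : (rfun v hv).length = 2*t := by
      have := hlenv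
      rw [SimpleGraph.Walk.length_concat] at this
      omega
    rw [hpv] at hmem
    rw [SimpleGraph.Walk.support_concat, List.mem_append] at hmem
    rcases hmem with hmem | hmem
    swap
    · simp at hmem
    by_cases hcw : c = w
    · subst hcw
      rcases Nat.eq_zero_or_pos t with rfl | ht
      · have h0 : (rfun v hv).length = 0 := by omega
        have := SimpleGraph.Walk.eq_of_length_eq_zero h0
        rw [Sum.inr.injEq] at this
        exact hne this
      · have hgg := girth_path_adj hg (pv v hv) hpath (tadj_vc adj hc) (by omega)
        rw [hlenv] at hgg
        omega
    · set d := (rfun v hv).dropUntil (Sum.inr c) hmem with hd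
      have hdpath : d.IsPath := hrpath.dropUntil hmem
      have hIv : Sum.inl v ∉ d.support := by
        intro hmem2
        have h1 : Sum.inl v ∉ (rfun v hv).support := not_mem_support_of_concat_isPath hpath
        exact h1 ((rfun v hv).support_dropUntil_subset hmem hmem2)
      set e := d.concat (tadj_cv adj (hadjfun v hv)) with he
      have hepath : e.IsPath := isPath_concat hdpath _ hIv
      have hdlen : 1 ≤ d.length := by
        rcases Nat.eq_zero_or_pos d.length with h0 | h0
        · have := SimpleGraph.Walk.eq_of_length_eq_zero h0
          rw [Sum.inr.injEq] at this
          exact absurd this hne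
        · exact h0
      have helen : e.length = d.length + 1 := SimpleGraph.Walk.length_concat _ _
      have hgg := girth_path_adj hg e hepath (tadj_vc adj hc) (by omega)
      have hdle : d.length ≤ (rfun v hv).length :=
        SimpleGraph.Walk.length_dropUntil_le (rfun v hv) hmem
      omega
  -- Fact B: a different variable adjacent to a fresh check is not on the walk pv
  have factB : ∀ (v : V) (hv : v ∈ layer adj S w t) (c : C) (v' : V),
      adj v c → c ≠ cfun v hv → adj v' c → v' ≠ v →
      Sum.inl v' ∉ (pv v hv).support := by
    intro v hv c v' hc hne hc' hne' hmem
    have hgood := hgoodfun v hv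
    have hlenv : (pv v hv).length = 2*t+1 := hlenfun v hv
    have hpath : (pv v hv).IsPath := hgood.1
    set d := (pv v hv).dropUntil (Sum.inl v') hmem with hd
    have hdpath : d.IsPath := hpath.dropUntil hmem
    have hIc : Sum.inr c ∉ d.support := by
      intro hmem2
      exact factA v hv c hc hne ((pv v hv).support_dropUntil_subset hmem hmem2)
    set e := d.concat (tadj_vc adj hc) with he
    have hepath : e.IsPath := isPath_concat hdpath _ hIc
    have hdlen : 1 ≤ d.length := by
      rcases Nat.eq_zero_or_pos d.length with h0 | h0
      · have := SimpleGraph.Walk.eq_of_length_eq_zero h0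
        rw [Sum.inl.injEq] at this
        exact absurd this hne'
      · exact h0
    have helen : e.length = d.length + 1 := SimpleGraph.Walk.length_concat _ _
    have hgg := girth_path_adj hg e hepath (tadj_cv adj hc') (by omega)
    have hdle : d.length ≤ (pv v hv).length :=
      SimpleGraph.Walk.length_dropUntil_le (pv v hv) hmem
    omega
  -- the extension walk and its properties
  have hQgood : ∀ (v : V) (hv : v ∈ layer adj S w t) (c : C) (hvc : adj v c)
      (hne : c ≠ cfun v hv) (v' : V) (hv'c : adj v' c) (hne' : v' ≠ v) (hv'S : v' ∈ S),
      TGood adj S (((pv v hv).concat (tadj_vc adj hvc)).concat (tadj_cv adj hv'c)) ∧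
        (((pv v hv).concat (tadj_vc adj hvc)).concat (tadj_cv adj hv'c)).length = 2*(t+1)+1 := by
    intro v hv c hvc hne v' hv'c hne' hv'S
    have hgood := hgoodfun v hv
    have hlenv : (pv v hv).length = 2*t+1 := hlenfun v hv
    have hq1path : ((pv v hv).concat (tadj_vc adj hvc)).IsPath :=
      isPath_concat hgood.1 _ (factA v hv c hvc hne)
    have hq1supp : ((pv v hv).concat (tadj_vc adj hvc)).support
        = (pv v hv).support ++ [Sum.inr c] := by
      rw [SimpleGraph.Walk.support_concat]
    have hQpath : (((pv v hv).concat (tadj_vc adj hvc)).concat (tadj_cv adj hv'c)).IsPath := by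
      apply isPath_concat hq1path
      rw [hq1supp, List.mem_append]
      rintro (hmem | hmem)
      · exact factB v hv c v' hvc hne hv'c hne' hmem
      · simp at hmem
    refine ⟨⟨hQpath, ?_⟩, ?_⟩
    · intro u hu
      rw [SimpleGraph.Walk.support_concat, hq1supp] at hu
      simp only [List.mem_append, List.mem_singleton] at hu
      rcases hu with (hu | hu) | hu
      · exact hgood.2 u hu
      · simp at hu
      · rw [Sum.inl.injEq] at hu
        exact hu ▸ hv'S
    · rw [SimpleGraph.Walk.length_concat, SimpleGraph.Walk.length_concat, hlenv]
      omega
  have hext : ∀ (v : V) (hv : v ∈ layer adj S w t) (c : C), adj v c → c ≠ cfun v hv →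
      ∀ v' : V, adj v' c → v' ≠ v → v' ∈ S → v' ∈ layer adj S w (t+1) := by
    intro v hv c hvc hne v' hv'c hne' hv'S
    obtain ⟨hg1, hg2⟩ := hQgood v hv c hvc hne v' hv'c hne' hv'S
    simp only [layer, Finset.mem_filter]
    exact ⟨hv'S, _, hg1, hg2⟩
  -- the "other neighbour" choice function
  have hnbr0 : ∀ (v : V) (c : C), ∃ v' : V,
      (v ∈ S ∧ adj v c ∧ chkDeg adj S c ≠ 1) → (v' ∈ S ∧ adj v' c ∧ v' ≠ v) := by
    intro v c
    by_cases h : v ∈ S ∧ adj v c ∧ chkDeg adj S c ≠ 1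
    · obtain ⟨hvS, hvc, hdeg⟩ := h
      have h1 : v ∈ S.filter (fun u => adj u c) := Finset.mem_filter.mpr ⟨hvS, hvc⟩
      have h2 : 1 < (S.filter (fun u => adj u c)).card := by
        have hpos : 0 < (S.filter (fun u => adj u c)).card :=
          Finset.card_pos.mpr ⟨v, h1⟩
        have : (S.filter (fun u => adj u c)).card ≠ 1 := hdeg
        omega
      obtain ⟨u, hu, hune⟩ := Finset.exists_mem_ne h2 v
      exact ⟨u, fun _ => ⟨(Finset.mem_filter.mp hu).1, (Finset.mem_filter.mp hu).2, hune⟩⟩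
    · exact ⟨v, fun hcontra => absurd hcontra h⟩
  choose nbr hnbr using hnbr0
  -- the parent check, as a total function
  set lastC : V → C := fun v => if hv : v ∈ layer adj S w t then cfun v hv else w with hlastC
  -- the set of candidate (variable, check) pairs
  set E : Finset (V × C) := (layer adj S w t).biUnion
    (fun v => (Finset.univ.filter (fun c => adj v c ∧ c ≠ lastC v)).image (fun c => (v, c)))
    with hE
  have hmemE : ∀ vc : V × C, vc ∈ E ↔ ∃ hv : vc.1 ∈ layer adj S w t,
      adj vc.1 vc.2 ∧ vc.2 ≠ cfun vc.1 hv := by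
    intro vc
    rw [hE, Finset.mem_biUnion]
    constructor
    · rintro ⟨v, hv, hvc⟩
      rw [Finset.mem_image] at hvc
      obtain ⟨c, hc, heq⟩ := hvc
      rw [Finset.mem_filter] at hc
      obtain ⟨-, hc1, hc2⟩ := hc
      rw [hlastC] at hc2
      simp only [dif_pos hv] at hc2
      cases heq
      exact ⟨hv, hc1, hc2⟩
    · rintro ⟨hv, h1, h2⟩
      refine ⟨vc.1, hv, ?_⟩
      rw [Finset.mem_image]
      refine ⟨vc.2, ?_, rfl⟩
      rw [Finset.mem_filter]
      refine ⟨Finset.mem_univ _, h1, ?_⟩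
      rw [hlastC]
      simp only [dif_pos hv]
      exact h2
  -- cardinality of E
  have hcardE : E.card = (layer adj S w t).card * (dv - 1) := by
    rw [hE, Finset.card_biUnion]
    · have hsingle : ∀ v ∈ layer adj S w t,
          ((Finset.univ.filter (fun c => adj v c ∧ c ≠ lastC v)).image (fun c => (v, c))).card
            = dv - 1 := by
        intro v hv
        rw [Finset.card_image_of_injective _ (by intro a b hab; cases hab; rfl)]
        have hfe : Finset.univ.filter (fun c => adj v c ∧ c ≠ lastC v)
            = (Finset.univ.filter (fun c => adj v c)).erase (lastC v) := by
          ext c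
          simp only [Finset.mem_filter, Finset.mem_erase, Finset.mem_univ, true_and]
          tauto
        have hvd : (Finset.univ.filter (fun c => adj v c)).card = dv := hreg v
        rw [hfe, Finset.card_erase_of_mem, hvd]
        rw [Finset.mem_filter]
        refine ⟨Finset.mem_univ _, ?_⟩
        rw [hlastC]
        simp only [dif_pos hv]
        exact hadjfun v hv
      rw [Finset.sum_congr rfl hsingle, Finset.sum_const, smul_eq_mul]
    · intro v1 hv1 v2 hv2 hne
      rw [Function.onFun, Finset.disjoint_left]
      intro vc h1 h2
      rw [Finset.mem_image] at h1 h2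
      obtain ⟨c1, -, heq1⟩ := h1
      obtain ⟨c2, -, heq2⟩ := h2
      apply hne
      rw [← heq1] at heq2
      exact (Prod.ext_iff.mp heq2).1.symm
  -- the injection
  set F : V × C → V ⊕ C := fun vc =>
    if chkDeg adj S vc.2 = 1 then Sum.inr vc.2 else Sum.inl (nbr vc.1 vc.2) with hF
  set T : Finset (V ⊕ C) := ((layer adj S w (t+1)).image Sum.inl)
    ∪ ((dead adj S w t).image Sum.inr) with hT
  have hmaps : ∀ vc ∈ E, F vc ∈ T := by
    intro vc hvc
    obtain ⟨hv, h1, h2⟩ := (hmemE vc).mp hvc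
    have hvS : vc.1 ∈ S := by
      have := hv
      simp only [layer, Finset.mem_filter] at this
      exact this.1
    rw [hF, hT]
    by_cases hdeg : chkDeg adj S vc.2 = 1
    · simp only [if_pos hdeg]
      apply Finset.mem_union_right
      rw [Finset.mem_image]
      refine ⟨vc.2, ?_, rfl⟩
      simp only [dead, Finset.mem_filter, Finset.mem_univ, true_and]
      exact ⟨hdeg, vc.1, hv, h1⟩
    · simp only [if_neg hdeg]
      apply Finset.mem_union_left
      rw [Finset.mem_image]
      refine ⟨nbr vc.1 vc.2, ?_, rfl⟩
      obtain ⟨hnS, hnadj, hnne⟩ := hnbr vc.1 vc.2 ⟨hvS, h1, hdeg⟩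
      exact hext vc.1 hv vc.2 h1 h2 _ hnadj hnne hnS
  have hinj : Set.InjOn F E := by
    intro vc1 hvc1 vc2 hvc2 hFeq
    obtain ⟨v1, c1⟩ := vc1
    obtain ⟨v2, c2⟩ := vc2
    rw [Finset.mem_coe] at hvc1 hvc2
    obtain ⟨hv1, h11, h12⟩ := (hmemE (v1, c1)).mp hvc1
    obtain ⟨hv2, h21, h22⟩ := (hmemE (v2, c2)).mp hvc2
    have hv1S : v1 ∈ S := by
      have := hv1; simp only [layer, Finset.mem_filter] at this; exact this.1
    have hv2S : v2 ∈ S := by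
      have := hv2; simp only [layer, Finset.mem_filter] at this; exact this.1
    rw [hF] at hFeq
    by_cases hd1 : chkDeg adj S c1 = 1 <;> by_cases hd2 : chkDeg adj S c2 = 1
    · simp only [if_pos hd1, if_pos hd2, Sum.inr.injEq] at hFeq
      -- same check of degree one: the unique neighbour forces equal variables
      obtain ⟨z, hz⟩ := Finset.card_eq_one.mp hd1
      have m1 : v1 ∈ S.filter (fun u => adj u c1) := Finset.mem_filter.mpr ⟨hv1S, h11⟩
      have m2 : v2 ∈ S.filter (fun u => adj u c1) := by
        rw [hFeq] at *
        exact Finset.mem_filter.mpr ⟨hv2S, h21⟩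
      rw [hz, Finset.mem_singleton] at m1 m2
      exact Prod.ext (m1.trans m2.symm) hFeq
    · simp only [if_pos hd1, if_neg hd2] at hFeq
      exact absurd hFeq (by simp)
    · simp only [if_neg hd1, if_pos hd2] at hFeq
      exact absurd hFeq (by simp)
    · simp only [if_neg hd1, if_neg hd2, Sum.inl.injEq] at hFeq
      obtain ⟨hn1S, hn1adj, hn1ne⟩ := hnbr v1 c1 ⟨hv1S, h11, hd1⟩
      obtain ⟨hn2S, hn2adj, hn2ne⟩ := hnbr v2 c2 ⟨hv2S, h21, hd2⟩
      rw [← hFeq] at hn2S hn2adj hn2ne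
      obtain ⟨hg1, hl1⟩ := hQgood v1 hv1 c1 h11 h12 _ hn1adj hn1ne hn1S
      obtain ⟨hg2, hl2⟩ := hQgood v2 hv2 c2 h21 h22 _ hn2adj hn2ne hn2S
      have hQeq : (((pv v1 hv1).concat (tadj_vc adj h11)).concat (tadj_cv adj hn1adj))
          = (((pv v2 hv2).concat (tadj_vc adj h21)).concat (tadj_cv adj hn2adj)) := by
        apply good_unique adj hg w _ _ hg1.1 hg2.1
        rw [hl1, hl2]
        omega
      obtain ⟨hvv, hcopy⟩ := SimpleGraph.Walk.concat_inj hQeq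
      rw [Sum.inr.injEq] at hvv
      subst hvv
      rw [SimpleGraph.Walk.copy_rfl_rfl] at hcopy
      obtain ⟨hvv2, hcopy2⟩ := SimpleGraph.Walk.concat_inj hcopy
      rw [Sum.inl.injEq] at hvv2
      exact Prod.ext hvv2 rfl
  have hcardle : E.card ≤ T.card := Finset.card_le_card_of_injOn F hmaps hinj
  have hcardT : T.card ≤ (layer adj S w (t+1)).card + (dead adj S w t).card := by
    rw [hT]
    calc (((layer adj S w (t+1)).image Sum.inl) ∪ ((dead adj S w t).image Sum.inr)).card
        ≤ ((layer adj S w (t+1)).image Sum.inl).card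
            + ((dead adj S w t).image Sum.inr).card := Finset.card_union_le _ _
      _ ≤ (layer adj S w (t+1)).card + (dead adj S w t).card := by
          gcongr <;> exact Finset.card_image_le
  rw [mul_comm, ← hcardE]
  exact hcardle.trans hcardT

end Tanner

lemma arith (r P k a b' : ℕ) (n d : ℕ → ℕ) (hr : 1 ≤ r) (hP : 1 ≤ P)
    (hn0 : n 0 = k) (hrec : ∀ t < P, r * n t ≤ n (t+1) + d t)
    (hd : (∑ t ∈ Finset.range P, d t) ≤ b') (hb' : b' ≤ k * r)
    (hsum : (∑ t ∈ Finset.range (P+1), n t) ≤ a) :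
    k + (k * r - b') * (∑ i ∈ Finset.range P, r ^ i) ≤ a := by
  have hR1 : (1:ℤ) ≤ (r:ℤ) := by exact_mod_cast hr
  have hR0 : (0:ℤ) ≤ (r:ℤ) := by linarith
  have key : ∀ t, 1 ≤ t → t ≤ P →
      (k : ℤ) * (r:ℤ) ^ t - (∑ s ∈ Finset.range t, (d s : ℤ)) * (r:ℤ) ^ (t-1) ≤ (n t : ℤ) := by
    intro t
    induction t with
    | zero => omega
    | succ t ih =>
      intro _ h2
      rcases Nat.eq_zero_or_pos t with rfl | ht
      · have h0 := hrec 0 (by omega)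
        have h0' : (r : ℤ) * (n 0 : ℤ) ≤ (n 1 : ℤ) + (d 0 : ℤ) := by exact_mod_cast h0
        rw [hn0] at h0'
        norm_num [Finset.sum_range_one]
        linarith
      · have iht := ih ht (by omega)
        have hrect : (r : ℤ) * (n t : ℤ) ≤ (n (t+1) : ℤ) + (d t : ℤ) := by
          exact_mod_cast hrec t (by omega)
        have e3 : (r:ℤ) * ((k : ℤ) * (r:ℤ) ^ t - (∑ s ∈ Finset.range t, (d s : ℤ)) * (r:ℤ) ^ (t-1))
            ≤ (r:ℤ) * (n t : ℤ) := mul_le_mul_of_nonneg_left iht hR0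
        have hpow : (r:ℤ) * (r:ℤ) ^ (t-1) = (r:ℤ) ^ t := by
          rw [← pow_succ']
          congr 1
          omega
        have e4 : (r:ℤ) * ((k : ℤ) * (r:ℤ) ^ t - (∑ s ∈ Finset.range t, (d s : ℤ)) * (r:ℤ) ^ (t-1))
            = (k : ℤ) * (r:ℤ) ^ (t+1) - (∑ s ∈ Finset.range t, (d s : ℤ)) * (r:ℤ) ^ t := by
          rw [mul_sub]
          congr 1
          · ring
          · rw [mul_comm ((r:ℤ)) _, mul_assoc, mul_comm ((r:ℤ)^(t-1)) _, hpow]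
        have hpt : (1:ℤ) ≤ (r:ℤ) ^ t := by
          have := pow_le_pow_left₀ (by norm_num : (0:ℤ) ≤ 1) hR1 t
          simpa using this
        have e5 : (d t : ℤ) ≤ (d t : ℤ) * (r:ℤ) ^ t := by
          nlinarith [Int.natCast_nonneg (d t)]
        have hsucc : t + 1 - 1 = t := by omega
        rw [Finset.sum_range_succ, hsucc]
        rw [e4] at e3
        nlinarith
  have key2 : ∀ t, 1 ≤ t → t ≤ P →
      ((k : ℤ) * (r:ℤ) - (b' : ℤ)) * (r:ℤ) ^ (t-1) ≤ (n t : ℤ) := by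
    intro t h1 h2
    have hk := key t h1 h2
    have hsum_le : (∑ s ∈ Finset.range t, (d s : ℤ)) ≤ (b' : ℤ) := by
      have hh : (∑ s ∈ Finset.range t, d s) ≤ ∑ s ∈ Finset.range P, d s :=
        Finset.sum_le_sum_of_subset (Finset.range_subset_range.mpr h2)
      exact_mod_cast hh.trans hd
    have hpownn : (0:ℤ) ≤ (r:ℤ) ^ (t-1) := pow_nonneg hR0 _
    have hpow : (r:ℤ) * (r:ℤ) ^ (t-1) = (r:ℤ) ^ t := by
      rw [← pow_succ']
      congr 1
      omega
    nlinarith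
  have hsplit : (∑ t ∈ Finset.range (P+1), (n t : ℤ))
      = (∑ i ∈ Finset.range P, (n (i+1) : ℤ)) + (n 0 : ℤ) := Finset.sum_range_succ' _ _
  have hlower : ((k : ℤ) * (r:ℤ) - (b' : ℤ)) * (∑ i ∈ Finset.range P, (r:ℤ) ^ i)
      ≤ ∑ i ∈ Finset.range P, (n (i+1) : ℤ) := by
    rw [Finset.mul_sum]
    apply Finset.sum_le_sum
    intro i hi
    rw [Finset.mem_range] at hi
    simpa using key2 (i+1) (by omega) (by omega)
  have hsum' : (∑ t ∈ Finset.range (P+1), (n t : ℤ)) ≤ (a : ℤ) := by exact_mod_cast hsum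
  have hgoal : (k : ℤ) + ((k : ℤ) * (r:ℤ) - (b' : ℤ)) * (∑ i ∈ Finset.range P, (r:ℤ) ^ i)
      ≤ (a : ℤ) := by
    rw [hn0] at hsplit
    linarith
  have hfin : ((k + (k * r - b') * (∑ i ∈ Finset.range P, r ^ i) : ℕ) : ℤ) ≤ (a : ℤ) := by
    push_cast [Nat.cast_sub hb']
    push_cast at hgoal
    exact hgoal
  exact_mod_cast hfin

/-- Lower bound on the size of a trapping set containing a check node of
degree `k ≥ 2`, in a variable-regular Tanner graph of degree `dv` and girth `g` with
`g/2` even: `a ≥ k + T · Σ_{i=0}^{g/4−2} (dv−1)^i`, where `b' = b − (k mod 2)` and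
`T = k(dv−1) − b'`, assuming `b < k(dv−1) + (k mod 2)`. -/
theorem ts_size_lower_bound {V C : Type*} [Fintype C] [DecidableEq V]
    (adj : V → C → Prop) [∀ v c, Decidable (adj v c)]
    (dv g : ℕ) (hdv : 2 ≤ dv) (hreg : ∀ v : V, varDeg adj v = dv)
    (hg4 : 4 < g) (hgeven : Even g) (hg2even : Even (g / 2))
    (hgirth : (tanner adj).egirth = (g : ℕ∞))
    (S : Finset V) (a b : ℕ) (ha : S.card = a) (hb : (oddChks adj S).card = b)
    (w : C) (k : ℕ) (hk : 2 ≤ k) (hw : chkDeg adj S w = k)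
    (hbk : b < k * (dv - 1) + k % 2) :
    k + (k * (dv - 1) - (b - k % 2)) * ∑ i ∈ Finset.range (g / 4 - 1), (dv - 1) ^ i
      ≤ a := by
  classical
  have hg : ∀ (z : V ⊕ C) (c : (tanner adj).Walk z z), c.IsCycle → g ≤ c.length := by
    intro z c hc
    have h := SimpleGraph.le_egirth.mp hgirth.ge z c hc
    exact_mod_cast h
  obtain ⟨x, hx⟩ := hgeven
  obtain ⟨y, hy⟩ := hg2even
  set P : ℕ := g / 4 - 1 with hP
  have hg8 : 8 ≤ g := by omega
  have hP1 : 1 ≤ P := by omega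
  have hPg : 4 * P + 4 = g := by omega
  -- counting
  set n : ℕ → ℕ := fun t => (layer adj S w t).card with hn
  set d : ℕ → ℕ := fun t => (dead adj S w t).card with hd
  have f1 : n 0 = k := by
    rw [hn]
    simp only [layer_zero]
    exact hw
  have f2 : ∀ t < P, (dv - 1) * n t ≤ n (t+1) + d t := by
    intro t ht
    exact expansion adj hg S w hdv hreg t (by omega)
  have f3 : (∑ t ∈ Finset.range P, d t) ≤ b - k % 2 := by
    have hdd : ∀ s ∈ Finset.range P, ∀ t ∈ Finset.range P, s ≠ t →
        Disjoint (dead adj S w s) (dead adj S w t) := by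
      intro s hs t ht hst
      rw [Finset.mem_range] at hs ht
      exact dead_disjoint adj hg S w hst (by omega)
    have hcard := (Finset.card_biUnion hdd).symm
    have hsub : (Finset.range P).biUnion (dead adj S w) ⊆ (oddChks adj S).erase w := by
      intro c hc
      rw [Finset.mem_biUnion] at hc
      obtain ⟨t, -, hct⟩ := hc
      have h2 := dead_subset adj S w (by rw [hw]; exact hk) t c hct
      exact Finset.mem_erase.mpr ⟨h2.2, h2.1⟩
    have hle := (Finset.card_le_card hsub)
    rw [← hcard] at hle
    have herase : ((oddChks adj S).erase w).card ≤ b - k % 2 := by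
      by_cases hodd : w ∈ oddChks adj S
      · have hk2 : k % 2 = 1 := by
          have : Odd (chkDeg adj S w) := by
            simpa [oddChks, Finset.mem_filter] using hodd
          rw [hw, Nat.odd_iff] at this
          omega
        rw [Finset.card_erase_of_mem hodd, hb, hk2]
      · have hk2 : k % 2 = 0 := by
          by_contra hne
          apply hodd
          simp only [oddChks, Finset.mem_filter, Finset.mem_univ, true_and, hw]
          rw [Nat.odd_iff]
          omega
        rw [Finset.erase_eq_of_notMem hodd, hb, hk2]
        omega
    exact hle.trans herase
  have f4 : (∑ t ∈ Finset.range (P+1), n t) ≤ a := by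
    have hld : ∀ s ∈ Finset.range (P+1), ∀ t ∈ Finset.range (P+1), s ≠ t →
        Disjoint (layer adj S w s) (layer adj S w t) := by
      intro s hs t ht hst
      rw [Finset.mem_range] at hs ht
      exact layer_disjoint adj hg S w hst (by omega)
    have hcard := (Finset.card_biUnion hld).symm
    have hsub : (Finset.range (P+1)).biUnion (layer adj S w) ⊆ S := by
      intro v hv
      rw [Finset.mem_biUnion] at hv
      obtain ⟨t, -, hvt⟩ := hv
      have := hvt
      simp only [layer, Finset.mem_filter] at this
      exact this.1
    have hle := (Finset.card_le_card hsub)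
    rw [← hcard, ha] at hle
    exact hle
  have f5 : b - k % 2 ≤ k * (dv - 1) := by
    generalize k * (dv - 1) = K at hbk ⊢
    omega
  exact arith (dv - 1) P k a (b - k % 2) n d (by omega) hP1 f1 f2 f3 f5 f4
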